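/- Let I : ℕ → ℕ be a sequence of positive integers, and let T : ℕ → ℕ be the concatenated sequence which on the k-th block of length I(k) takes values 0, 1, ..., I(k)-1. Suppose the Cesàro limits lim_{m→∞} (1/m) ∑_{k=1}^m I(k) = μ₁ > 0 and lim_{m→∞} (1/m) ∑_{k=1}^m I(k)² = μ₂ exist (as real numbers). Then lim_{M→∞} (1/M) ∑_{t=1}^M T(t) = (μ₂/μ₁ - 1)/2. -/

import Mathlib

open Finset Filter

private lemma gauss_real (n : ℕ) (hn : 0 < n) :
    (∑ i ∈ Finset.range n, (i : ℝ)) = ((n : ℝ) ^ 2 - n) / 2 := by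
  have h := Finset.sum_range_id_mul_two n
  have h2 : ((∑ i ∈ Finset.range n, i : ℕ) : ℝ) * 2 = (n : ℝ) * ((n : ℝ) - 1) := by
    rw [← Nat.cast_ofNat, ← Nat.cast_mul, h, Nat.cast_mul, Nat.cast_sub hn, Nat.cast_one]
  push_cast at h2
  nlinarith [h2]

private lemma shift_div (f : ℕ → ℝ) (c : ℝ)
    (h : Filter.Tendsto (fun m : ℕ => f m / m) Filter.atTop (nhds c)) :
    Filter.Tendsto (fun m : ℕ => f (m + 1) / m) Filter.atTop (nhds c) := by
  have t1 := h.comp (tendsto_add_atTop_nat 1)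
  have t2 : Filter.Tendsto (fun m : ℕ => ((m : ℝ) + 1) / m) Filter.atTop (nhds 1) := by
    have := tendsto_one_div_atTop_nhds_zero_nat (𝕜 := ℝ)
    have h3 : Filter.Tendsto (fun m : ℕ => 1 + 1 / (m : ℝ)) Filter.atTop (nhds (1 + 0)) :=
      tendsto_const_nhds.add this
    rw [add_zero] at h3
    apply h3.congr'
    filter_upwards [Filter.eventually_ge_atTop 1] with m hm
    have hm' : (m : ℝ) ≠ 0 := Nat.cast_ne_zero.2 (by omega)
    field_simp
  have t3 := t1.mul t2
  rw [mul_one] at t3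
  apply t3.congr'
  filter_upwards [Filter.eventually_ge_atTop 1] with m hm
  have hm' : (m : ℝ) ≠ 0 := Nat.cast_ne_zero.2 (by omega)
  simp only [Function.comp]
  push_cast
  field_simp

/-- Deterministic Cesàro-average version of Lemma 1: if the inter-service times `I k`
have Cesàro means `μ₁ > 0` and Cesàro second moments `μ₂`, then the time average of
the concatenated TSLS counter converges to `(μ₂/μ₁ - 1)/2`. -/
theorem stmt_2 (I : ℕ → ℕ) (hI : ∀ k, 0 < I k) (T : ℕ → ℕ)
    (S : ℕ → ℕ) (hS : ∀ m, S m = ∑ k ∈ Finset.range m, I k)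
    (hT : ∀ k, ∀ t, S k ≤ t → t < S (k + 1) → T t = t - S k)
    (μ₁ μ₂ : ℝ) (hμ₁pos : 0 < μ₁)
    (h1 : Tendsto (fun m : ℕ => (∑ k ∈ Finset.range m, (I k : ℝ)) / m) atTop (nhds μ₁))
    (h2 : Tendsto (fun m : ℕ => (∑ k ∈ Finset.range m, (I k : ℝ) ^ 2) / m) atTop (nhds μ₂)) :
    Tendsto (fun M : ℕ => (∑ t ∈ Finset.range M, (T t : ℝ)) / M) atTop
      (nhds ((μ₂ / μ₁ - 1) / 2)) := by
  have hS0 : S 0 = 0 := by simp [hS]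
  have hSsucc : ∀ m, S (m + 1) = S m + I m := by
    intro m; rw [hS, hS, Finset.sum_range_succ]
  have hSmono : StrictMono S := strictMono_nat_of_lt_succ (fun n => by
    rw [hSsucc]; exact Nat.lt_add_of_pos_right (hI n))
  have hSle : ∀ m, m ≤ S m := fun m => hSmono.le_apply
  have hScast : ∀ m, (S m : ℝ) = ∑ k ∈ Finset.range m, (I k : ℝ) := by
    intro m; rw [hS]; push_cast; rfl
  -- block sum identity
  have hblock : ∀ m, (∑ t ∈ Finset.range (S m), (T t : ℝ))
      = ∑ k ∈ Finset.range m, (((I k : ℝ)) ^ 2 - (I k : ℝ)) / 2 := by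
    intro m
    induction m with
    | zero => simp [hS0]
    | succ m ih =>
      rw [Finset.sum_range_succ, ← ih, Finset.range_eq_Ico,
        ← Finset.sum_Ico_consecutive _ (Nat.zero_le (S m)) (hSmono (Nat.lt_succ_self m)).le,
        ← Finset.range_eq_Ico]
      congr 1
      rw [Finset.sum_Ico_eq_sum_range]
      have hlen : S (m + 1) - S m = I m := by rw [hSsucc]; omega
      rw [hlen, ← gauss_real (I m) (hI m)]
      apply Finset.sum_congr rfl
      intro i hi
      rw [Finset.mem_range] at hi
      rw [hT m (S m + i) (Nat.le_add_right _ _) (by rw [hSsucc]; omega)]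
      simp
  -- abbreviation for block sums
  set B : ℕ → ℝ := fun m => ∑ k ∈ Finset.range m, (((I k : ℝ)) ^ 2 - (I k : ℝ)) / 2 with hBdef
  have hBnonneg : ∀ m, 0 ≤ B m := by
    intro m
    apply Finset.sum_nonneg
    intro k _
    have : (1 : ℝ) ≤ (I k : ℝ) := by exact_mod_cast hI k
    nlinarith
  have hB : Tendsto (fun m : ℕ => B m / m) atTop (nhds ((μ₂ - μ₁) / 2)) := by
    have := (h2.sub h1).div_const 2
    apply this.congr
    intro m
    have e : (∑ k ∈ Finset.range m, (((I k : ℝ)) ^ 2 - (I k : ℝ)) / 2)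
        = ((∑ k ∈ Finset.range m, (I k : ℝ) ^ 2) - ∑ k ∈ Finset.range m, (I k : ℝ)) / 2 := by
      rw [← Finset.sum_div, Finset.sum_sub_distrib]
    simp only [hBdef]
    rw [e]
    ring
  have hSdiv : Tendsto (fun m : ℕ => (S m : ℝ) / m) atTop (nhds μ₁) := by
    apply h1.congr; intro m; rw [hScast]
  have hSdiv' : Tendsto (fun m : ℕ => (S (m + 1) : ℝ) / m) atTop (nhds μ₁) :=
    shift_div (fun m => (S m : ℝ)) μ₁ hSdiv
  have hBdiv' : Tendsto (fun m : ℕ => B (m + 1) / m) atTop (nhds ((μ₂ - μ₁) / 2)) :=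
    shift_div B _ hB
  have hL : ((μ₂ - μ₁) / 2) / μ₁ = (μ₂ / μ₁ - 1) / 2 := by
    field_simp
  have hSpos : ∀ m, 0 < m → (0 : ℝ) < (S m : ℝ) := by
    intro m hm
    exact_mod_cast lt_of_lt_of_le hm (hSle m)
  -- lower and upper sequences
  have hlower : Tendsto (fun k : ℕ => B k / (S (k + 1) : ℝ)) atTop (nhds ((μ₂ / μ₁ - 1) / 2)) := by
    rw [← hL]
    have := hB.div hSdiv' (ne_of_gt hμ₁pos)
    apply this.congr'
    filter_upwards [Filter.eventually_ge_atTop 1] with k hk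
    have hk' : (k : ℝ) ≠ 0 := Nat.cast_ne_zero.2 (by omega)
    simp only [Pi.div_apply]
    have hs : ((S (k + 1)) : ℝ) ≠ 0 := ne_of_gt (hSpos _ (Nat.succ_pos k))
    field_simp
  have hupper : Tendsto (fun k : ℕ => B (k + 1) / (S k : ℝ)) atTop (nhds ((μ₂ / μ₁ - 1) / 2)) := by
    rw [← hL]
    have := hBdiv'.div hSdiv (ne_of_gt hμ₁pos)
    apply this.congr'
    filter_upwards [Filter.eventually_ge_atTop 1] with k hk
    have hk' : (k : ℝ) ≠ 0 := Nat.cast_ne_zero.2 (by omega)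
    simp only [Pi.div_apply]
    have hs : ((S k) : ℝ) ≠ 0 := ne_of_gt (hSpos _ hk)
    field_simp
  -- the block-counting function
  set n : ℕ → ℕ := fun M => Nat.findGreatest (fun k => S k ≤ M) M with hndef
  have hnle : ∀ M, S (n M) ≤ M := by
    intro M
    have h0 : S 0 ≤ M := by rw [hS0]; exact Nat.zero_le M
    exact Nat.findGreatest_spec (P := fun k => S k ≤ M) (m := 0) (Nat.zero_le M) h0
  have hnlt : ∀ M, M < S (n M + 1) := by
    intro M
    by_contra h
    push_neg at h
    have h1' : n M + 1 ≤ M := le_trans (hSle _) h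
    have h2' : n M + 1 ≤ n M := Nat.le_findGreatest (P := fun k => S k ≤ M) h1' h
    omega
  have htop : Tendsto n atTop atTop := by
    rw [tendsto_atTop_atTop]
    intro K
    refine ⟨S K, fun M hM => ?_⟩
    exact Nat.le_findGreatest (P := fun k => S k ≤ M) (le_trans (hSle K) hM) hM
  -- squeeze
  apply tendsto_of_tendsto_of_tendsto_of_le_of_le' (hlower.comp htop) (hupper.comp htop)
  · filter_upwards [Filter.eventually_ge_atTop (S 1)] with M hM
    have hn1 : 1 ≤ n M := Nat.le_findGreatest (P := fun k => S k ≤ M) (le_trans (hSle 1) hM) hM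
    have hM1 : 1 ≤ M := le_trans (le_trans (hSle 1) hM) (le_refl M)
    simp only [Function.comp, hBdef]
    rw [← hblock]
    have hMpos : (0 : ℝ) < (M : ℝ) := by exact_mod_cast hM1
    gcongr <;>
      first
        | positivity
        | exact hnle M
        | exact (hnlt M).le
        | exact_mod_cast hnle M
        | exact_mod_cast (hnlt M).le
        | exact hMpos
        | (intro t _ _; positivity)
  · filter_upwards [Filter.eventually_ge_atTop (S 1)] with M hM
    have hn1 : 1 ≤ n M := Nat.le_findGreatest (P := fun k => S k ≤ M) (le_trans (hSle 1) hM) hM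
    simp only [Function.comp, hBdef]
    rw [← hblock]
    have hSnpos : (0 : ℝ) < (S (n M) : ℝ) := hSpos (n M) hn1
    gcongr <;>
      first
        | positivity
        | exact hnle M
        | exact (hnlt M).le
        | exact_mod_cast hnle M
        | exact_mod_cast (hnlt M).le
        | exact hSnpos
        | (intro t _ _; positivity)
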